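/- Let P be a row-stochastic matrix on a finite nonempty set S, let k ≥ 1 be an integer, let ε ∈ (0,1], and let q be a probability vector on S such that (P^k)_{s,s'} ≥ ε·q(s') for all s, s' ∈ S (Doeblin minorization). Let η be a stationary distribution of P. Then for every probability vector μ₀ on S and every integer n ≥ 0, the total variation distance satisfies (1/2)·Σ_{s'∈S} |(μ₀·P^{nk})(s') − η(s')| ≤ (1 − ε)^n, where μ₀·P^{nk} denotes the row vector obtained by multiplying μ₀ by the nk-fold matrix power of P. -/
import Mathlib


open Finset

variable {S : Type*}

/-- A row-stochastic matrix: nonnegative entries, each row sums to `1`. -/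
def RowStochastic [Fintype S] (P : Matrix S S ℝ) : Prop :=
  (∀ s s', 0 ≤ P s s') ∧ ∀ s, ∑ s', P s s' = 1

/-- A stationary distribution of `P`. -/
def StationaryDist [Fintype S] (P : Matrix S S ℝ) (η : S → ℝ) : Prop :=
  (∀ s, 0 ≤ η s) ∧ (∑ s, η s = 1) ∧ ∀ s', ∑ s, η s * P s s' = η s'

lemma rowStochastic_pow [Fintype S] [DecidableEq S] (P : Matrix S S ℝ)
    (hP : RowStochastic P) (m : ℕ) : RowStochastic (P ^ m) := by
  induction m with
  | zero =>
    constructor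
    · intro s s'
      simp [Matrix.one_apply]
      split <;> norm_num
    · intro s
      simp [Matrix.one_apply]
  | succ m ih =>
    rw [pow_succ]
    constructor
    · intro s s'
      rw [Matrix.mul_apply]
      exact Finset.sum_nonneg fun t _ => mul_nonneg (ih.1 s t) (hP.1 t s')
    · intro s
      simp only [Matrix.mul_apply]
      rw [Finset.sum_comm]
      calc ∑ t, ∑ s', (P ^ m) s t * P t s' = ∑ t, (P ^ m) s t * ∑ s', P t s' := by
            simp [Finset.mul_sum]
        _ = 1 := by simp [hP.2, ih.2 s]

lemma sum_vecMul [Fintype S] (P : Matrix S S ℝ) (hP : RowStochastic P) (μ : S → ℝ) :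
    ∑ s', Matrix.vecMul μ P s' = ∑ s, μ s := by
  simp only [Matrix.vecMul, dotProduct]
  rw [Finset.sum_comm]
  simp [← Finset.mul_sum, hP.2]

/-- Contraction: if `∑ d = 0`, multiplying by a minorized stochastic matrix contracts L¹. -/
lemma contract [Fintype S] (Q : Matrix S S ℝ) (hQ : RowStochastic Q)
    (ε : ℝ) (q : S → ℝ) (hq1 : ∑ s, q s = 1)
    (hmin : ∀ s s', ε * q s' ≤ Q s s')
    (d : S → ℝ) (hd : ∑ s, d s = 0) :
    ∑ s', |Matrix.vecMul d Q s'| ≤ (1 - ε) * ∑ s, |d s| := by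
  have key : ∀ s', Matrix.vecMul d Q s' = ∑ s, d s * (Q s s' - ε * q s') := by
    intro s'
    simp only [Matrix.vecMul, dotProduct, mul_sub]
    rw [Finset.sum_sub_distrib]
    have : ∑ s, d s * (ε * q s') = (∑ s, d s) * (ε * q s') := by
      rw [Finset.sum_mul]
    rw [this, hd]
    ring
  calc ∑ s', |Matrix.vecMul d Q s'|
      ≤ ∑ s', ∑ s, |d s| * (Q s s' - ε * q s') := by
        apply Finset.sum_le_sum
        intro s' _
        rw [key s']
        refine (Finset.abs_sum_le_sum_abs _ _).trans ?_
        apply Finset.sum_le_sum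
        intro s _
        rw [abs_mul, abs_of_nonneg (show (0:ℝ) ≤ Q s s' - ε * q s' by linarith [hmin s s'])]
    _ = ∑ s, |d s| * (1 - ε) := by
        rw [Finset.sum_comm]
        congr 1
        ext s
        rw [← Finset.mul_sum, Finset.sum_sub_distrib, hQ.2 s, ← Finset.mul_sum, hq1, mul_one]
    _ = (1 - ε) * ∑ s, |d s| := by
        rw [Finset.mul_sum]; exact Finset.sum_congr rfl fun s _ => mul_comm _ _

theorem stmt4 [Fintype S] [DecidableEq S] [Nonempty S] (P : Matrix S S ℝ)
    (hP : RowStochastic P) (k : ℕ) (hk : 1 ≤ k)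
    (ε : ℝ) (hε0 : 0 < ε) (hε1 : ε ≤ 1)
    (q : S → ℝ) (hq0 : ∀ s, 0 ≤ q s) (hq1 : ∑ s, q s = 1)
    (hDoeblin : ∀ s s', ε * q s' ≤ (P ^ k) s s')
    (η : S → ℝ) (hη : StationaryDist P η)
    (μ₀ : S → ℝ) (hμ₀0 : ∀ s, 0 ≤ μ₀ s) (hμ₀1 : ∑ s, μ₀ s = 1) (n : ℕ) :
    (1 / 2) * ∑ s', |Matrix.vecMul μ₀ (P ^ (n * k)) s' - η s'| ≤ (1 - ε) ^ n := by
  have hQ := rowStochastic_pow P hP k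
  -- η stationary for any power
  have hηP : Matrix.vecMul η P = η := by
    ext s'
    simpa [Matrix.vecMul, dotProduct] using hη.2.2 s'
  have hηpow : ∀ m, Matrix.vecMul η (P ^ m) = η := by
    intro m
    induction m with
    | zero => simp
    | succ m ih =>
      rw [pow_succ, ← Matrix.vecMul_vecMul, ih, hηP]
  -- sum of μ₀ P^m equals 1
  have hsum : ∀ m, ∑ s, Matrix.vecMul μ₀ (P ^ m) s = 1 := by
    intro m
    rw [sum_vecMul _ (rowStochastic_pow P hP m), hμ₀1]
  suffices h : ∑ s', |Matrix.vecMul μ₀ (P ^ (n * k)) s' - η s'| ≤ 2 * (1 - ε) ^ n by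
    linarith
  induction n with
  | zero =>
    simp only [zero_mul, pow_zero, Matrix.vecMul_one, mul_one]
    calc ∑ s', |μ₀ s' - η s'| ≤ ∑ s', (μ₀ s' + η s') := by
          apply Finset.sum_le_sum
          intro s _
          rw [abs_sub_le_iff]
          constructor <;> [linarith [hη.1 s]; linarith [hμ₀0 s]]
      _ = 2 := by rw [Finset.sum_add_distrib, hμ₀1, hη.2.1]; norm_num
  | succ n ih =>
    have hstep : ∀ s', Matrix.vecMul μ₀ (P ^ ((n + 1) * k)) s' - η s'
        = Matrix.vecMul (fun s => Matrix.vecMul μ₀ (P ^ (n * k)) s - η s) (P ^ k) s' := by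
      intro s'
      have h1 : P ^ ((n + 1) * k) = P ^ (n * k) * P ^ k := by
        rw [← pow_add]; ring_nf
      rw [h1, ← Matrix.vecMul_vecMul]
      have : Matrix.vecMul (fun s => Matrix.vecMul μ₀ (P ^ (n * k)) s - η s) (P ^ k)
          = Matrix.vecMul (Matrix.vecMul μ₀ (P ^ (n * k))) (P ^ k)
            - Matrix.vecMul η (P ^ k) := by
        rw [← Matrix.sub_vecMul]
        rfl
      rw [this, hηpow k]
      simp
    have hd0 : ∑ s, (Matrix.vecMul μ₀ (P ^ (n * k)) s - η s) = 0 := by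
      rw [Finset.sum_sub_distrib, hsum, hη.2.1, sub_self]
    calc ∑ s', |Matrix.vecMul μ₀ (P ^ ((n + 1) * k)) s' - η s'|
        = ∑ s', |Matrix.vecMul (fun s => Matrix.vecMul μ₀ (P ^ (n * k)) s - η s) (P ^ k) s'| := by
          simp only [hstep]
      _ ≤ (1 - ε) * ∑ s, |Matrix.vecMul μ₀ (P ^ (n * k)) s - η s| :=
          contract _ hQ ε q hq1 hDoeblin _ hd0
      _ ≤ (1 - ε) * (2 * (1 - ε) ^ n) := by
          apply mul_le_mul_of_nonneg_left ih (by linarith)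
      _ = 2 * (1 - ε) ^ (n + 1) := by ring
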